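/- There exists a universal constant C > 0 such that for every κ > 0 and every continuously differentiable, compactly supported function u : ℝ³ → ℝ whose support is contained in the closed strip ℝ² × [0,1], one has ‖u‖_{L⁶(ℝ³)} ≤ C ( κ^{-1/2} ‖∇_h u‖_{L²(ℝ³)} + κ ‖∂₃ u‖_{L²(ℝ³)} ). -/

import Mathlib

open MeasureTheory ENNReal NNReal

noncomputable def scaleMap (l : ℝ) : (Fin 3 → ℝ) →ₗ[ℝ] (Fin 3 → ℝ) :=
  Matrix.toLin' (Matrix.diagonal (fun i => if i = 2 then l else 1))

lemma scaleMap_apply (l : ℝ) (x : Fin 3 → ℝ) (i : Fin 3) :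
    scaleMap l x i = (if i = 2 then l else 1) * x i := by
  simp [scaleMap, Matrix.toLin'_apply, Matrix.mulVec_diagonal]

lemma scaleMap_det (l : ℝ) : LinearMap.det (scaleMap l) = l := by
  rw [scaleMap, LinearMap.det_toLin', Matrix.det_diagonal]
  simp [Fin.prod_univ_three]

lemma scaleMap_comp (l : ℝ) (hl : l ≠ 0) :
    (scaleMap l) ∘ₗ (scaleMap l⁻¹) = LinearMap.id := by
  rw [scaleMap, scaleMap, ← Matrix.toLin'_mul, Matrix.diagonal_mul_diagonal]
  have h1 : (fun i : Fin 3 => (if i = 2 then l else 1) * if i = 2 then l⁻¹ else 1) =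
      fun _ : Fin 3 => (1:ℝ) := by
    funext i
    by_cases h : i = 2 <;> simp [h, mul_inv_cancel₀ hl]
  rw [h1, Matrix.diagonal_one, Matrix.toLin'_one]

noncomputable def scaleEquiv (l : ℝ) (hl : l ≠ 0) : (Fin 3 → ℝ) ≃L[ℝ] (Fin 3 → ℝ) :=
  LinearEquiv.toContinuousLinearEquiv <|
    LinearEquiv.ofLinear (scaleMap l) (scaleMap l⁻¹)
      (scaleMap_comp l hl)
      (by have := scaleMap_comp l⁻¹ (inv_ne_zero hl); rwa [inv_inv] at this)

lemma scaleEquiv_coe (l : ℝ) (hl : l ≠ 0) (x : Fin 3 → ℝ) : scaleEquiv l hl x = scaleMap l x := rfl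

lemma eLpNorm_comp_scale {l : ℝ} (hl : 0 < l) {g : (Fin 3 → ℝ) → ℝ}
    (hg : AEStronglyMeasurable g volume) (p : ℝ≥0∞) :
    eLpNorm (g ∘ ⇑(scaleMap l)) p volume =
      (ENNReal.ofReal l)⁻¹ ^ (1 / p).toReal * eLpNorm g p volume := by
  have hdet : LinearMap.det (scaleMap l) ≠ 0 := by rw [scaleMap_det]; exact hl.ne'
  have hmap : Measure.map (⇑(scaleMap l)) volume = (ENNReal.ofReal l)⁻¹ • volume := by
    rw [Measure.map_linearMap_addHaar_eq_smul_addHaar volume hdet, scaleMap_det,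
      abs_of_pos (inv_pos.mpr hl), ENNReal.ofReal_inv_of_pos hl]
  have hmeas : AEMeasurable (⇑(scaleMap l)) volume :=
    (scaleMap l).continuous_of_finiteDimensional.measurable.aemeasurable
  have hg' : AEStronglyMeasurable g (Measure.map (⇑(scaleMap l)) volume) := by
    rw [hmap]
    exact hg.mono_ac (Measure.smul_absolutelyContinuous)
  rw [← eLpNorm_map_measure hg' hmeas, hmap,
    eLpNorm_smul_measure_of_ne_zero (by simp [hl, hl.ne']), smul_eq_mul]

lemma opNorm_le_three (L : (Fin 3 → ℝ) →L[ℝ] ℝ) :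
    ‖L‖ ≤ |L (Pi.single 0 1)| + |L (Pi.single 1 1)| + |L (Pi.single 2 1)| := by
  refine L.opNorm_le_bound (by positivity) fun x => ?_
  have hsingle : ∀ (i : Fin 3) (t : ℝ), (Pi.single i t : Fin 3 → ℝ) = t • (Pi.single i 1 : Fin 3 → ℝ) := by
    intro i t; ext j; by_cases h : j = i <;> simp [h, Pi.single_apply]
  have hx : x = Pi.single 0 (x 0) + Pi.single 1 (x 1) + Pi.single 2 (x 2) := by
    have h := Finset.univ_sum_single x
    rw [Fin.sum_univ_three] at h
    exact h.symm
  have h0 : |x 0| ≤ ‖x‖ := norm_le_pi_norm x 0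
  have h1 : |x 1| ≤ ‖x‖ := norm_le_pi_norm x 1
  have h2 : |x 2| ≤ ‖x‖ := norm_le_pi_norm x 2
  calc ‖L x‖ = |x 0 * L (Pi.single 0 1) + x 1 * L (Pi.single 1 1) + x 2 * L (Pi.single 2 1)| := by
        conv_lhs => rw [hx]
        rw [map_add, map_add, hsingle 0 (x 0), hsingle 1 (x 1), hsingle 2 (x 2),
          L.map_smul, L.map_smul, L.map_smul, smul_eq_mul, smul_eq_mul, smul_eq_mul]
        simp [Real.norm_eq_abs]
    _ ≤ |x 0| * |L (Pi.single 0 1)| + |x 1| * |L (Pi.single 1 1)| + |x 2| * |L (Pi.single 2 1)| := by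
        refine (abs_add_le _ _).trans ?_
        gcongr
        · exact (abs_add_le _ _).trans (by rw [abs_mul, abs_mul])
        · rw [abs_mul]
    _ ≤ (|L (Pi.single 0 1)| + |L (Pi.single 1 1)| + |L (Pi.single 2 1)|) * ‖x‖ := by
        have n0 : (0:ℝ) ≤ |L (Pi.single 0 1)| := abs_nonneg _
        have n1 : (0:ℝ) ≤ |L (Pi.single 1 1)| := abs_nonneg _
        have n2 : (0:ℝ) ≤ |L (Pi.single 2 1)| := abs_nonneg _
        nlinarith [abs_nonneg (x 0), abs_nonneg (x 1), abs_nonneg (x 2)]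

theorem anisotropic_sobolev_strip :
    ∃ C : ℝ, 0 < C ∧
      ∀ κ : ℝ, 0 < κ →
      ∀ u : (Fin 3 → ℝ) → ℝ, ContDiff ℝ 1 u → HasCompactSupport u →
        (Function.support u ⊆ {x : Fin 3 → ℝ | x 2 ∈ Set.Icc (0 : ℝ) 1}) →
        eLpNorm u 6 volume ≤
          ENNReal.ofReal C *
            (ENNReal.ofReal (κ ^ (-(1/2) : ℝ)) *
                eLpNorm (fun x => Real.sqrt
                  ((fderiv ℝ u x (Pi.single 0 1)) ^ 2 +
                   (fderiv ℝ u x (Pi.single 1 1)) ^ 2)) 2 volume +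
              ENNReal.ofReal κ *
                eLpNorm (fun x => fderiv ℝ u x (Pi.single 2 1)) 2 volume) := by
  classical
  set K : ℝ≥0 := SNormLESNormFDerivOfEqConst ℝ (volume : Measure (Fin 3 → ℝ)) 2 with hKdef
  refine ⟨2 * ((K : ℝ) + 1), by positivity, ?_⟩
  intro κ hκ u hu h2u _
  set l : ℝ := κ ^ ((3:ℝ)/2) with hldef
  have hl : 0 < l := Real.rpow_pos_of_pos hκ _
  set S := scaleEquiv l hl.ne' with hSdef
  have hScoe : ⇑S = ⇑(scaleMap l) := funext fun x => scaleEquiv_coe l hl.ne' x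
  set v : (Fin 3 → ℝ) → ℝ := u ∘ ⇑S with hvdef
  have hv : ContDiff ℝ 1 v := hu.comp S.contDiff
  have h2v : HasCompactSupport v := h2u.comp_homeomorph S.toHomeomorph
  -- the functions appearing on the right-hand side
  set g : (Fin 3 → ℝ) → ℝ := fun x => Real.sqrt
      ((fderiv ℝ u x (Pi.single 0 1)) ^ 2 + (fderiv ℝ u x (Pi.single 1 1)) ^ 2) with hgdef
  set h : (Fin 3 → ℝ) → ℝ := fun x => |fderiv ℝ u x (Pi.single 2 1)| with hhdef
  have hfc : Continuous (fderiv ℝ u) := hu.continuous_fderiv one_ne_zero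
  have hc0 : Continuous fun x => fderiv ℝ u x (Pi.single 0 1) := hfc.clm_apply continuous_const
  have hc1 : Continuous fun x => fderiv ℝ u x (Pi.single 1 1) := hfc.clm_apply continuous_const
  have hc2 : Continuous fun x => fderiv ℝ u x (Pi.single 2 1) := hfc.clm_apply continuous_const
  have hgc : Continuous g := ((hc0.pow 2).add (hc1.pow 2)).sqrt
  have hhc : Continuous h := hc2.abs
  -- Gagliardo-Nirenberg-Sobolev for v
  have hGNS : eLpNorm v 6 volume ≤ (K : ℝ≥0∞) * eLpNorm (fderiv ℝ v) 2 volume := by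
    have h6 : ((6 : ℝ≥0) : ℝ≥0∞) = 6 := by norm_num
    have h2 : ((2 : ℝ≥0) : ℝ≥0∞) = 2 := by norm_num
    have := eLpNorm_le_eLpNorm_fderiv_of_eq (μ := (volume : Measure (Fin 3 → ℝ)))
      hv h2v (p := 2) (p' := 6) (by norm_num)
      (by simp)
      (by simp only [Module.finrank_fintype_fun_eq_card, Fintype.card_fin]; norm_num)
    rw [h6, h2] at this
    convert this using 3
    simp [hKdef]
  -- derivative components of v
  have hfd : ∀ x, fderiv ℝ v x =
      (fderiv ℝ u (S x)).comp (S : (Fin 3 → ℝ) →L[ℝ] (Fin 3 → ℝ)) := by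
    intro x
    exact S.comp_right_fderiv
  have hSsingle : ∀ i : Fin 3,
      S (Pi.single i 1) = ((if i = 2 then l else 1) : ℝ) • (Pi.single i 1 : Fin 3 → ℝ) := by
    intro i
    funext j
    rw [show S (Pi.single i 1) = scaleMap l (Pi.single i 1) from congrFun hScoe _]
    rw [scaleMap_apply]
    by_cases hj : j = i
    · subst hj
      simp [Pi.single_apply]
    · simp [Pi.single_apply, hj]
  have hcomp : ∀ (x : Fin 3 → ℝ) (i : Fin 3), fderiv ℝ v x (Pi.single i 1) =
      (if i = 2 then l else 1) * fderiv ℝ u (S x) (Pi.single i 1) := by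
    intro x i
    rw [hfd x, ContinuousLinearMap.comp_apply]
    rw [show ((S : (Fin 3 → ℝ) →L[ℝ] (Fin 3 → ℝ)) (Pi.single i 1)) = S (Pi.single i 1) from rfl,
      hSsingle i, (fderiv ℝ u (S x)).map_smul, smul_eq_mul]
  -- pointwise bound on the operator norm of the derivative of v
  have hpoint : ∀ x, ‖fderiv ℝ v x‖ ≤ ‖(2 * g (S x) + l * h (S x) : ℝ)‖ := by
    intro x
    have hb := opNorm_le_three (fderiv ℝ v x)
    rw [hcomp x 0, hcomp x 1, hcomp x 2] at hb
    simp only [show (0 : Fin 3) ≠ 2 by decide, show (1 : Fin 3) ≠ 2 by decide,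
      if_neg, if_pos rfl, one_mul, reduceIte] at hb
    have hg0 : |fderiv ℝ u (S x) (Pi.single 0 1)| ≤ g (S x) := by
      rw [hgdef]
      have := Real.sqrt_le_sqrt (le_add_of_nonneg_right (sq_nonneg
        (fderiv ℝ u (S x) (Pi.single 1 1))) :
        (fderiv ℝ u (S x) (Pi.single 0 1))^2 ≤
        (fderiv ℝ u (S x) (Pi.single 0 1))^2 + (fderiv ℝ u (S x) (Pi.single 1 1))^2)
      rwa [Real.sqrt_sq_eq_abs] at this
    have hg1 : |fderiv ℝ u (S x) (Pi.single 1 1)| ≤ g (S x) := by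
      rw [hgdef]
      have := Real.sqrt_le_sqrt (le_add_of_nonneg_left (sq_nonneg
        (fderiv ℝ u (S x) (Pi.single 0 1))) :
        (fderiv ℝ u (S x) (Pi.single 1 1))^2 ≤
        (fderiv ℝ u (S x) (Pi.single 0 1))^2 + (fderiv ℝ u (S x) (Pi.single 1 1))^2)
      rwa [Real.sqrt_sq_eq_abs] at this
    have hh2 : |l * fderiv ℝ u (S x) (Pi.single 2 1)| = l * h (S x) := by
      rw [abs_mul, abs_of_pos hl, hhdef]
    have hgnn : 0 ≤ g (S x) := Real.sqrt_nonneg _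
    have hhnn : 0 ≤ h (S x) := abs_nonneg _
    rw [Real.norm_eq_abs, abs_of_nonneg (by positivity)]
    calc ‖fderiv ℝ v x‖ ≤ _ := hb
      _ ≤ 2 * g (S x) + l * h (S x) := by
          rw [hh2] at hb ⊢
          linarith
  have hW : eLpNorm (fderiv ℝ v) 2 volume ≤
      eLpNorm (fun x => 2 * g (S x) + l * h (S x)) 2 volume := eLpNorm_mono hpoint
  -- split and rescale
  set a : ℝ≥0∞ := ENNReal.ofReal l with hadef
  have ha0 : a ≠ 0 := (ENNReal.ofReal_pos.mpr hl).ne'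
  have haT : a ≠ ⊤ := ENNReal.ofReal_ne_top
  have hi0 : a⁻¹ ≠ 0 := ENNReal.inv_ne_zero.mpr haT
  have hiT : a⁻¹ ≠ ⊤ := ENNReal.inv_ne_top.mpr ha0
  have e2 : ((1 : ℝ≥0∞)/2).toReal = (1/2 : ℝ) := by norm_num
  have e6 : ((1 : ℝ≥0∞)/6).toReal = (1/6 : ℝ) := by norm_num
  set G := eLpNorm g 2 volume with hGdef
  set H := eLpNorm h 2 volume with hHdef
  have hGeq : eLpNorm (g ∘ ⇑(scaleMap l)) 2 volume = a⁻¹ ^ (1/2 : ℝ) * G := by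
    rw [eLpNorm_comp_scale hl hgc.aestronglyMeasurable 2, e2]
  have hHeq : eLpNorm (h ∘ ⇑(scaleMap l)) 2 volume = a⁻¹ ^ (1/2 : ℝ) * H := by
    rw [eLpNorm_comp_scale hl hhc.aestronglyMeasurable 2, e2]
  have hUeq : eLpNorm (u ∘ ⇑(scaleMap l)) 6 volume = a⁻¹ ^ (1/6 : ℝ) * eLpNorm u 6 volume := by
    rw [eLpNorm_comp_scale hl hu.continuous.aestronglyMeasurable 6, e6]
  have hsplit : eLpNorm (fun x => 2 * g (S x) + l * h (S x)) 2 volume ≤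
      2 * (a⁻¹ ^ (1/2 : ℝ) * G) + a * (a⁻¹ ^ (1/2 : ℝ) * H) := by
    have hfun : (fun x => 2 * g (S x) + l * h (S x)) =
        (2:ℝ) • (g ∘ ⇑S) + l • (h ∘ ⇑S) := by
      funext x
      simp [Pi.smul_apply, smul_eq_mul]
    rw [hfun]
    have m1 : AEStronglyMeasurable ((2:ℝ) • (g ∘ ⇑S)) volume :=
      ((hgc.comp S.continuous).const_smul (2:ℝ)).aestronglyMeasurable
    have m2 : AEStronglyMeasurable (l • (h ∘ ⇑S)) volume :=
      ((hhc.comp S.continuous).const_smul l).aestronglyMeasurable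
    refine le_trans (eLpNorm_add_le m1 m2 (by norm_num)) ?_
    rw [eLpNorm_const_smul, eLpNorm_const_smul, hScoe, hGeq, hHeq]
    have hn2 : ‖(2:ℝ)‖ₑ = 2 := by rw [Real.enorm_eq_ofReal (by norm_num), ENNReal.ofReal_ofNat]
    have hnl : ‖l‖ₑ = a := by
      rw [Real.enorm_eq_ofReal hl.le]
    rw [hn2, hnl]
    -- power computations
  have hpow1 : a ^ (1/6:ℝ) * a⁻¹ ^ (1/2:ℝ) = ENNReal.ofReal (κ ^ (-(1/2) : ℝ)) := by
    rw [ENNReal.inv_rpow, ← ENNReal.rpow_neg, ← ENNReal.rpow_add _ _ ha0 haT]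
    rw [show (1/6 + -(1/2) : ℝ) = -(1/3) by norm_num, hadef,
      ENNReal.ofReal_rpow_of_pos hl, hldef, ← Real.rpow_mul hκ.le]
    norm_num
  have hpow2 : a ^ (1/6:ℝ) * (a * a⁻¹ ^ (1/2:ℝ)) = ENNReal.ofReal κ := by
    rw [ENNReal.inv_rpow, ← ENNReal.rpow_neg]
    nth_rewrite 2 [show a = a ^ (1:ℝ) by rw [ENNReal.rpow_one]]
    rw [← ENNReal.rpow_add _ _ ha0 haT, ← ENNReal.rpow_add _ _ ha0 haT]
    rw [show (1/6 + (1 + -(1/2)) : ℝ) = 2/3 by norm_num, hadef,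
      ENNReal.ofReal_rpow_of_pos hl, hldef, ← Real.rpow_mul hκ.le]
    norm_num
  have hfirst : eLpNorm u 6 volume = a ^ (1/6:ℝ) * eLpNorm v 6 volume := by
    have h1 : eLpNorm v 6 volume = a⁻¹ ^ (1/6:ℝ) * eLpNorm u 6 volume := by
      rw [hvdef, hScoe]; exact hUeq
    have h2 : a ^ (1/6:ℝ) * a⁻¹ ^ (1/6:ℝ) = 1 := by
      rw [ENNReal.inv_rpow, ENNReal.mul_inv_cancel]
      · rw [hadef, ENNReal.ofReal_rpow_of_pos hl]
        exact (ENNReal.ofReal_pos.mpr (Real.rpow_pos_of_pos hl _)).ne'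
      · rw [hadef, ENNReal.ofReal_rpow_of_pos hl]
        exact ENNReal.ofReal_ne_top
    rw [h1, ← mul_assoc, h2, one_mul]
  set X := ENNReal.ofReal (κ ^ (-(1/2) : ℝ)) with hXdef
  set Y := ENNReal.ofReal κ with hYdef
  have hHfinal : H = eLpNorm (fun x => fderiv ℝ u x (Pi.single 2 1)) 2 volume := by
    rw [hHdef, hhdef]
    simp_rw [← Real.norm_eq_abs]
    exact eLpNorm_norm _
  have hCc : ENNReal.ofReal (2*((K:ℝ)+1)) = 2 * ((K:ℝ≥0∞)+1) := by
    rw [ENNReal.ofReal_mul (by norm_num : (0:ℝ) ≤ 2),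
      ENNReal.ofReal_add K.coe_nonneg zero_le_one, ENNReal.ofReal_coe_nnreal,
      ENNReal.ofReal_one, ENNReal.ofReal_ofNat]
  have hk1 : (K:ℝ≥0∞) ≤ 2*((K:ℝ≥0∞)+1) := by
    calc (K:ℝ≥0∞) ≤ (K:ℝ≥0∞) + 1 := le_self_add
      _ ≤ 2*((K:ℝ≥0∞)+1) := by rw [two_mul]; exact le_self_add
  have hk2 : 2*(K:ℝ≥0∞) ≤ 2*((K:ℝ≥0∞)+1) := by
    exact mul_le_mul_right le_self_add 2
  calc eLpNorm u 6 volume = a ^ (1/6:ℝ) * eLpNorm v 6 volume := hfirst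
    _ ≤ a ^ (1/6:ℝ) * ((K:ℝ≥0∞) * (2 * (a⁻¹ ^ (1/2:ℝ) * G) + a * (a⁻¹ ^ (1/2:ℝ) * H))) :=
        mul_le_mul_right (hGNS.trans (mul_le_mul_right (hW.trans hsplit) _)) _
    _ = (K:ℝ≥0∞) * (2 * ((a ^ (1/6:ℝ) * a⁻¹ ^ (1/2:ℝ)) * G) +
          (a ^ (1/6:ℝ) * (a * a⁻¹ ^ (1/2:ℝ))) * H) := by ring
    _ = (K:ℝ≥0∞) * (2 * (X * G) + Y * H) := by rw [hpow1, hpow2]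
    _ = (2*(K:ℝ≥0∞)) * (X * G) + (K:ℝ≥0∞) * (Y * H) := by ring
    _ ≤ (2*((K:ℝ≥0∞)+1)) * (X * G) + (2*((K:ℝ≥0∞)+1)) * (Y * H) :=
        add_le_add (mul_le_mul_left hk2 _) (mul_le_mul_left hk1 _)
    _ = (2*((K:ℝ≥0∞)+1)) * (X * G + Y * H) := by ring
    _ = ENNReal.ofReal (2*((K:ℝ)+1)) *
          (X * G + Y * eLpNorm (fun x => fderiv ℝ u x (Pi.single 2 1)) 2 volume) := by
        rw [hCc, hHfinal]
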